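/- Let ℓ divide m and consider the class code 𝒞_ℓ = {(b, b^q, …, b^{q^{ℓ−1}}) : b ∈ GF(q^ℓ)} ⊆ L^ℓ. Its covering radius in the symbol Hamming metric, ρ(𝒞_ℓ) = max_{y ∈ L^ℓ} min_{c ∈ 𝒞_ℓ} |{t : y_t ≠ c_t}|, equals ℓ if ℓ < m, and equals ℓ − 1 if ℓ = m. -/

import Mathlib

open scoped Classical

private lemma frob_inj {L : Type*} [Field L] [Fintype L] {q m : ℕ}
    (hL : Fintype.card L = q ^ m) {t : ℕ} (ht : t ≤ m) {x y : L}
    (h : x ^ q ^ t = y ^ q ^ t) : x = y := by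
  have hx : x ^ q ^ m = x := by rw [← hL]; exact FiniteField.pow_card x
  have hy : y ^ q ^ m = y := by rw [← hL]; exact FiniteField.pow_card y
  have h2 : (x ^ q ^ t) ^ q ^ (m - t) = (y ^ q ^ t) ^ q ^ (m - t) := by rw [h]
  rw [← pow_mul, ← pow_mul, ← pow_add, Nat.add_sub_cancel' ht, hx, hy] at h2
  exact h2

theorem stmt_14 (q m ℓ : ℕ) (hq : IsPrimePow q) (hm : 0 < m) (hℓ : ℓ ∣ m)
    (L : Type*) [Field L] [Fintype L] (hL : Fintype.card L = q ^ m) :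
    (ℓ < m →
      Finset.univ.sup (fun y : Fin ℓ → L =>
        sInf {d : ℕ | ∃ b : L, b ^ q ^ ℓ = b ∧
          d = (Finset.univ.filter (fun t : Fin ℓ => y t ≠ b ^ q ^ (t : ℕ))).card}) = ℓ) ∧
    (ℓ = m →
      Finset.univ.sup (fun y : Fin ℓ → L =>
        sInf {d : ℕ | ∃ b : L, b ^ q ^ ℓ = b ∧
          d = (Finset.univ.filter (fun t : Fin ℓ => y t ≠ b ^ q ^ (t : ℕ))).card}) = ℓ - 1) := by
  have hq2 : 2 ≤ q := hq.two_le
  have hℓpos : 0 < ℓ := Nat.pos_of_dvd_of_pos hℓ hm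
  have hℓm : ℓ ≤ m := Nat.le_of_dvd hm hℓ
  have hqℓ1 : 1 < q ^ ℓ := one_lt_pow₀ (by omega) hℓpos.ne'
  -- nonempty: b = 0 always works
  have hzero : ∀ y : Fin ℓ → L, ((0 : L) ^ q ^ ℓ = 0 ∧
      (Finset.univ.filter (fun t : Fin ℓ => y t ≠ (0:L) ^ q ^ (t : ℕ))).card =
      (Finset.univ.filter (fun t : Fin ℓ => y t ≠ (0:L) ^ q ^ (t : ℕ))).card) := by
    intro y
    exact ⟨zero_pow (by positivity), rfl⟩
  constructor
  · intro hlt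
    apply le_antisymm
    · apply Finset.sup_le
      intro y _
      have hmem : (Finset.univ.filter (fun t : Fin ℓ => y t ≠ (0:L) ^ q ^ (t : ℕ))).card ∈
          {d : ℕ | ∃ b : L, b ^ q ^ ℓ = b ∧
            d = (Finset.univ.filter (fun t : Fin ℓ => y t ≠ b ^ q ^ (t : ℕ))).card} :=
        ⟨0, zero_pow (by positivity), rfl⟩
      calc sInf _ ≤ _ := Nat.sInf_le hmem
        _ ≤ (Finset.univ : Finset (Fin ℓ)).card := Finset.card_filter_le _ _
        _ = ℓ := by simp
    · -- find a with a ^ q ^ ℓ ≠ a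
      obtain ⟨a, ha⟩ : ∃ a : L, a ^ q ^ ℓ ≠ a := by
        by_contra hcon
        push_neg at hcon
        -- every element is a root of X^(q^ℓ) - X
        set P : Polynomial L := Polynomial.X ^ (q ^ ℓ) - Polynomial.X with hP
        have hdeg : P.natDegree = q ^ ℓ := by
          rw [hP, Polynomial.natDegree_sub_eq_left_of_natDegree_lt] <;>
            simp [Polynomial.natDegree_X_pow, hqℓ1]
        have hP0 : P ≠ 0 := fun h => by simp [h] at hdeg; omega
        have hsub : (Finset.univ : Finset L).val ≤ P.roots := by
          apply Finset.val_le_iff_val_subset.2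
          intro x _
          rw [Polynomial.mem_roots hP0]
          simp [hP, sub_eq_zero, hcon x]
        have := (Multiset.card_le_card hsub).trans (Polynomial.card_roots' P)
        have h2 : Fintype.card L ≤ q ^ ℓ := hdeg ▸ this
        rw [hL] at h2
        exact absurd h2 (not_le.2 (Nat.pow_lt_pow_right (by omega) hlt))
      -- use y t = a ^ q ^ t
      apply le_trans _ (Finset.le_sup (Finset.mem_univ (fun t : Fin ℓ => a ^ q ^ (t : ℕ))))
      have : {d : ℕ | ∃ b : L, b ^ q ^ ℓ = b ∧
          d = (Finset.univ.filter
            (fun t : Fin ℓ => a ^ q ^ (t : ℕ) ≠ b ^ q ^ (t : ℕ))).card} = {ℓ} := by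
        ext d
        simp only [Set.mem_setOf_eq, Set.mem_singleton_iff]
        constructor
        · rintro ⟨b, hb, rfl⟩
          have hall : ∀ t : Fin ℓ, a ^ q ^ (t : ℕ) ≠ b ^ q ^ (t : ℕ) := by
            intro t h
            have : a = b := frob_inj hL (le_of_lt (lt_of_lt_of_le t.2 hℓm)) h
            rw [this] at ha
            exact ha hb
          rw [Finset.filter_true_of_mem (fun t _ => hall t)]
          simp
        · intro hd
          rw [hd]
          have ha0 : a ≠ 0 := by
            rintro rfl
            exact ha (zero_pow (by positivity))
          refine ⟨0, zero_pow (by positivity), ?_⟩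
          have hall : ∀ t : Fin ℓ, a ^ q ^ (t : ℕ) ≠ (0:L) ^ q ^ (t : ℕ) := by
            intro t h
            rw [zero_pow (by positivity)] at h
            exact ha0 ((pow_eq_zero_iff (by positivity : q ^ (t:ℕ) ≠ 0)).1 h)
          rw [Finset.filter_true_of_mem (fun t _ => hall t)]
          simp
      rw [this]
      simp
  · intro heq
    subst heq
    apply le_antisymm
    · apply Finset.sup_le
      intro y _
      -- b = y 0 agrees at coordinate 0
      have h0 : 0 < ℓ := hℓpos
      have hb : (y ⟨0, h0⟩) ^ q ^ ℓ = y ⟨0, h0⟩ := by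
        rw [← hL]; exact FiniteField.pow_card _
      have hmem : (Finset.univ.filter
          (fun t : Fin ℓ => y t ≠ (y ⟨0, h0⟩) ^ q ^ (t : ℕ))).card ∈
          {d : ℕ | ∃ b : L, b ^ q ^ ℓ = b ∧
            d = (Finset.univ.filter (fun t : Fin ℓ => y t ≠ b ^ q ^ (t : ℕ))).card} :=
        ⟨y ⟨0, h0⟩, hb, rfl⟩
      refine le_trans (Nat.sInf_le hmem) ?_
      have hsub : (Finset.univ.filter
          (fun t : Fin ℓ => y t ≠ (y ⟨0, h0⟩) ^ q ^ (t : ℕ))) ⊆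
          Finset.univ.erase ⟨0, h0⟩ := by
        intro t ht
        simp only [Finset.mem_filter] at ht
        apply Finset.mem_erase.2
        refine ⟨?_, Finset.mem_univ _⟩
        rintro rfl
        exact ht.2 (by simp)
      calc _ ≤ (Finset.univ.erase (⟨0, h0⟩ : Fin ℓ)).card := Finset.card_le_card hsub
        _ = ℓ - 1 := by rw [Finset.card_erase_of_mem (Finset.mem_univ _)]; simp
    · -- lower bound: pick ℓ distinct elements
      obtain ⟨f⟩ : Nonempty (Fin ℓ ↪ L) := by
        apply Function.Embedding.nonempty_of_card_le
        rw [Fintype.card_fin, hL]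
        calc ℓ ≤ 2 ^ ℓ := (Nat.lt_two_pow_self (n := ℓ)).le
          _ ≤ q ^ ℓ := Nat.pow_le_pow_left hq2 ℓ
      set y : Fin ℓ → L := fun t => (f t) ^ q ^ (t : ℕ) with hy
      apply le_trans _ (Finset.le_sup (Finset.mem_univ y))
      apply le_csInf
      · exact ⟨_, 0, zero_pow (by positivity), rfl⟩
      rintro d ⟨b, hb, rfl⟩
      -- agreements: y t = b ^ q ^ t iff f t = b; at most one t
      have key : ∀ t : Fin ℓ, ¬ (y t ≠ b ^ q ^ (t : ℕ)) → f t = b := by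
        intro t h
        push_neg at h
        exact frob_inj hL (le_of_lt t.2) h
      have hcompl : (Finset.univ.filter (fun t : Fin ℓ => ¬ (y t ≠ b ^ q ^ (t : ℕ)))).card ≤ 1 := by
        apply Finset.card_le_one.2
        intro s hs t ht
        simp only [Finset.mem_filter] at hs ht
        exact f.injective ((key s hs.2).trans (key t ht.2).symm)
      have := Finset.card_filter_add_card_filter_not
        (s := (Finset.univ : Finset (Fin ℓ))) (p := fun t => y t ≠ b ^ q ^ (t : ℕ))
      simp only [Finset.card_univ, Fintype.card_fin] at this
      omega
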